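/- Let n ≥ 2 and let λ₁,…,λₙ > 1. For φ ∈ (0, π/2] define the chain x_j(φ) = (λ₁⋯λ_j)·e^{iφ} ∈ ℍ² for 0 ≤ j ≤ n. Then as φ → 0⁺, τ(x₀(φ),…,xₙ(φ)) converges to 2·log( [Π_{j=1}^{n−1}(λ_j·λ_{j+1} − 1)] / [(λ₁⋯λₙ − 1)·Π_{j=2}^{n−1}(λ_j − 1)] ). -/

import Mathlib

open UpperHalfPlane Real Filter

/-- The tension of the chain `x 0, x 1, …, x n`:
`τ = Σ_{j=1}^{n−1} d(x_{j−1},x_{j+1}) − Σ_{j=2}^{n−1} d(x_{j−1},x_j) − d(x_0,x_n)`. -/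
noncomputable def tension (n : ℕ) (x : ℕ → UpperHalfPlane) : ℝ :=
  (∑ j ∈ Finset.range (n - 1), dist (x j) (x (j + 2)))
    - (∑ j ∈ Finset.range (n - 2), dist (x (j + 1)) (x (j + 2)))
    - dist (x 0) (x n)

/-- The Gromov product `⟨x,y⟩_z = (d(x,z)+d(z,y)−d(x,y))/2`. -/
noncomputable def gromov (x y z : UpperHalfPlane) : ℝ :=
  (dist x z + dist z y - dist x y) / 2

/-- A pair `(a,b)` is good if `a, b ≥ 0` and `sinh(a−b) > 2·sinh(a/2)`. -/
def GoodPair (a b : ℝ) : Prop :=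
  0 ≤ a ∧ 0 ≤ b ∧ Real.sinh (a - b) > 2 * Real.sinh (a / 2)

/-- The chain `x 0, …, x n` is `(a,b)`-good. -/
def GoodChain (a b : ℝ) (n : ℕ) (x : ℕ → UpperHalfPlane) : Prop :=
  (∀ j < n, dist (x (j + 1)) (x j) ≥ a) ∧
  (∀ j, 1 ≤ j → j + 1 ≤ n → gromov (x (j - 1)) (x (j + 1)) (x j) ≤ b)

noncomputable def hhF (C s : ℝ) : ℝ := Real.log (C + Real.sqrt (s^2 + C^2))

noncomputable def Cm (m : ℝ) : ℝ := (m - 1) / (2 * Real.sqrt m)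

lemma Cm_pos {m : ℝ} (hm : 1 < m) : 0 < Cm m := by
  have : (0:ℝ) < m := by linarith
  exact div_pos (by linarith) (by positivity)

lemma hhF_zero {C : ℝ} (hC : 0 ≤ C) : hhF C 0 = Real.log (2*C) := by
  have : (0:ℝ)^2 + C^2 = C^2 := by ring
  rw [hhF, this, Real.sqrt_sq hC, two_mul]

lemma hhF_Cm_zero {m : ℝ} (hm : 1 < m) : hhF (Cm m) 0 = Real.log (m-1) - Real.log m / 2 := by
  have hm0 : (0:ℝ) < m := by linarith
  have hsm : 0 < Real.sqrt m := Real.sqrt_pos.2 hm0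
  have h2 : 2 * Cm m = (m-1)/Real.sqrt m := by
    rw [Cm]; field_simp
  rw [hhF_zero (Cm_pos hm).le, h2, Real.log_div (by linarith) hsm.ne', Real.log_sqrt hm0.le]

lemma hhF_contAt {C : ℝ} (hC : 0 < C) :
    Filter.Tendsto (fun s => hhF C s) (nhds 0) (nhds (hhF C 0)) := by
  have h1 : Continuous (fun s : ℝ => C + Real.sqrt (s^2 + C^2)) := by continuity
  have h2 : ContinuousAt (fun s => hhF C s) 0 := by
    apply ContinuousAt.log h1.continuousAt
    have : (0:ℝ) < C + Real.sqrt ((0:ℝ)^2 + C^2) := by positivity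
    exact ne_of_gt this
  exact h2.tendsto

lemma arsinh_div_eq {C s : ℝ} (hC : 0 < C) (hs : 0 < s) :
    Real.arsinh (C / s) = hhF C s - Real.log s := by
  have h1 : 1 + (C/s)^2 = (s^2 + C^2)/s^2 := by field_simp
  have h2 : Real.sqrt ((s^2 + C^2)/s^2) = Real.sqrt (s^2 + C^2) / s := by
    rw [Real.sqrt_div (by positivity), Real.sqrt_sq hs.le]
  have h3 : C / s + Real.sqrt (s^2 + C^2) / s = (C + Real.sqrt (s^2+C^2))/s := by ring
  rw [Real.arsinh, h1, h2, h3, Real.log_div (by positivity) hs.ne', hhF]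

lemma dist_ray {t m φ : ℝ} (ht : 0 < t) (hm : 1 < m) (hφ : 0 < φ) (hφ2 : φ ≤ π/2)
    {z w : UpperHalfPlane} (hz : (z:ℂ) = (t:ℝ) * Complex.exp (φ*Complex.I))
    (hw : (w:ℂ) = ((t*m : ℝ):ℂ) * Complex.exp (φ*Complex.I)) :
    dist z w = 2 * Real.arsinh (Cm m / Real.sin φ) := by
  have hsin : 0 < Real.sin φ := Real.sin_pos_of_pos_of_lt_pi hφ
    (lt_of_le_of_lt hφ2 (by linarith [Real.pi_pos]))
  have hm0 : (0:ℝ) < m := by linarith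
  have hsm : 0 < Real.sqrt m := Real.sqrt_pos.2 hm0
  have hzim : z.im = t * Real.sin φ := by
    rw [UpperHalfPlane.im, hz]
    simp [Complex.mul_im, Complex.exp_ofReal_mul_I_im, Complex.exp_ofReal_mul_I_re]
  have hwim : w.im = (t*m) * Real.sin φ := by
    rw [UpperHalfPlane.im, hw]
    simp [Complex.mul_im, Complex.exp_ofReal_mul_I_im, Complex.exp_ofReal_mul_I_re]
  have hd : dist (z:ℂ) (w:ℂ) = t*(m-1) := by
    rw [Complex.dist_eq, hz, hw]
    have : (t:ℂ) * Complex.exp (φ*Complex.I) - ((t*m:ℝ):ℂ) * Complex.exp (φ*Complex.I)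
        = ((t*(1-m):ℝ):ℂ) * Complex.exp (φ*Complex.I) := by push_cast; ring
    rw [this, norm_mul, Complex.norm_exp_ofReal_mul_I, mul_one, Complex.norm_real, Real.norm_eq_abs,
      abs_of_nonpos (by nlinarith)]
    ring
  have hsq : Real.sqrt (z.im * w.im) = (t * Real.sin φ) * Real.sqrt m := by
    rw [hzim, hwim]
    have : t * Real.sin φ * (t * m * Real.sin φ) = (t * Real.sin φ)^2 * m := by ring
    rw [this, Real.sqrt_mul (sq_nonneg _), Real.sqrt_sq (by positivity)]
  rw [UpperHalfPlane.dist_eq, hd, hsq]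
  congr 1
  rw [Cm, div_div]
  congr 1
  field_simp

/-- The limiting function. -/
noncomputable def FF (n : ℕ) (lam : ℕ → ℝ) (tn : ℝ) (s : ℝ) : ℝ :=
  2 * ((∑ j ∈ Finset.range (n-1), hhF (Cm (lam (j+1) * lam (j+2))) s)
    - (∑ j ∈ Finset.range (n-2), hhF (Cm (lam (j+2))) s) - hhF (Cm tn) s)

/-- As `φ → 0⁺`, the tension of the chain `x_j(φ) = (λ₁⋯λ_j)·e^{iφ}` converges to
`2·log( Π_{j=1}^{n−1}(λ_jλ_{j+1}−1) / ((λ₁⋯λₙ−1)·Π_{j=2}^{n−1}(λ_j−1)) )`. -/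
theorem tension_tendsto_at_zero_angle (n : ℕ) (hn : 2 ≤ n) (lam : ℕ → ℝ)
    (hlam : ∀ j, 1 ≤ j → j ≤ n → 1 < lam j)
    (x : ℝ → ℕ → UpperHalfPlane)
    (hx : ∀ φ : ℝ, 0 < φ → φ ≤ π / 2 → ∀ j ≤ n,
      ((x φ j : ℂ)) = ((∏ i ∈ Finset.Icc 1 j, lam i : ℝ) : ℂ) * Complex.exp (φ * Complex.I)) :
    Filter.Tendsto (fun φ : ℝ => tension n (x φ)) (nhdsWithin 0 (Set.Ioi 0))
      (nhds (2 * Real.log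
        ((∏ j ∈ Finset.Icc 1 (n - 1), (lam j * lam (j + 1) - 1)) /
          (((∏ j ∈ Finset.Icc 1 n, lam j) - 1) * ∏ j ∈ Finset.Icc 2 (n - 1), (lam j - 1))))) := by
  obtain ⟨m, rfl⟩ : ∃ m, n = m + 2 := ⟨n - 2, by omega⟩
  have hlampos : ∀ j, 1 ≤ j → j ≤ m + 2 → (0:ℝ) < lam j :=
    fun j h1 h2 => lt_trans one_pos (hlam j h1 h2)
  set T : ℕ → ℝ := fun j => ∏ i ∈ Finset.Icc 1 j, lam i with hTdef
  have hTpos : ∀ j, j ≤ m + 2 → 0 < T j := by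
    intro j hj
    apply Finset.prod_pos
    intro i hi
    rw [Finset.mem_Icc] at hi
    exact hlampos i hi.1 (le_trans hi.2 hj)
  have hTstep : ∀ j, j + 1 ≤ m + 2 → T (j+1) = T j * lam (j+1) := by
    intro j hj
    exact Finset.prod_Icc_succ_top (by omega) _
  have hT1 : ∀ j, j ≤ m + 2 → 1 ≤ T j := by
    intro j
    induction j with
    | zero => intro _; simp [hTdef]
    | succ k ih =>
      intro hk
      have h1 : 1 ≤ T k := ih (by omega)
      have h2 : 1 < lam (k+1) := hlam (k+1) (by omega) hk
      rw [hTstep k hk]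
      nlinarith
  have hTn1 : 1 < T (m+2) := by
    rw [hTstep (m+1) (by omega)]
    have h1 : 1 ≤ T (m+1) := hT1 (m+1) (by omega)
    have h2 : 1 < lam (m+2) := hlam (m+2) (by omega) (by omega)
    nlinarith
  have hmul : ∀ j, j + 2 ≤ m + 2 → 1 < lam (j+1) * lam (j+2) := by
    intro j hj
    have h1 := hlam (j+1) (by omega) (by omega)
    have h2 := hlam (j+2) (by omega) (by omega)
    nlinarith
  have hsingle : ∀ j, j + 2 ≤ m + 2 → 1 < lam (j+2) := fun j hj => hlam (j+2) (by omega) hj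
  -- key: tension equals FF ∘ sin on (0, π/2]
  have key : ∀ φ : ℝ, 0 < φ → φ ≤ π/2 →
      tension (m+2) (x φ) = FF (m+2) lam (T (m+2)) (Real.sin φ) := by
    intro φ hφ hφ2
    have hs : 0 < Real.sin φ := Real.sin_pos_of_pos_of_lt_pi hφ
      (lt_of_le_of_lt hφ2 (by linarith [Real.pi_pos]))
    set s := Real.sin φ with hsdef
    have hx' : ∀ j ≤ m + 2, ((x φ j : ℂ)) = ((T j : ℝ):ℂ) * Complex.exp (φ * Complex.I) :=
      fun j hj => hx φ hφ hφ2 j hj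
    have hd1 : ∀ j ∈ Finset.range (m+2-1), dist (x φ j) (x φ (j+2))
        = 2 * (hhF (Cm (lam (j+1) * lam (j+2))) s - Real.log s) := by
      intro j hj
      rw [Finset.mem_range] at hj
      have hj2 : j + 2 ≤ m + 2 := by omega
      have hT2 : T (j+2) = T j * (lam (j+1) * lam (j+2)) := by
        rw [hTstep (j+1) hj2, hTstep j (by omega)]; ring
      rw [dist_ray (hTpos j (by omega)) (hmul j hj2) hφ hφ2 (hx' j (by omega))
        (by rw [hx' (j+2) hj2, hT2]),
        arsinh_div_eq (Cm_pos (hmul j hj2)) hs]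
    have hd2 : ∀ j ∈ Finset.range (m+2-2), dist (x φ (j+1)) (x φ (j+2))
        = 2 * (hhF (Cm (lam (j+2))) s - Real.log s) := by
      intro j hj
      rw [Finset.mem_range] at hj
      have hj2 : j + 2 ≤ m + 2 := by omega
      have hT2 : T (j+2) = T (j+1) * lam (j+2) := hTstep (j+1) hj2
      rw [dist_ray (hTpos (j+1) (by omega)) (hsingle j hj2) hφ hφ2 (hx' (j+1) (by omega))
        (by rw [hx' (j+2) hj2, hT2]),
        arsinh_div_eq (Cm_pos (hsingle j hj2)) hs]
    have hd3 : dist (x φ 0) (x φ (m+2)) = 2 * (hhF (Cm (T (m+2))) s - Real.log s) := by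
      have hT0 : T 0 = 1 := by simp [hTdef]
      have h0 : ((x φ 0 : ℂ)) = ((1:ℝ):ℂ) * Complex.exp (φ * Complex.I) := by
        rw [hx' 0 (by omega), hT0]
      have hhn : ((x φ (m+2) : ℂ)) = (((1:ℝ) * T (m+2) : ℝ):ℂ) * Complex.exp (φ * Complex.I) := by
        rw [hx' (m+2) (le_refl _), one_mul]
      rw [dist_ray one_pos hTn1 hφ hφ2 h0 hhn, arsinh_div_eq (Cm_pos hTn1) hs]
    have e1 : tension (m+2) (x φ)
        = (∑ j ∈ Finset.range (m+2-1), 2 * (hhF (Cm (lam (j+1) * lam (j+2))) s - Real.log s))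
          - (∑ j ∈ Finset.range (m+2-2), 2 * (hhF (Cm (lam (j+2))) s - Real.log s))
          - 2 * (hhF (Cm (T (m+2))) s - Real.log s) := by
      unfold tension
      rw [Finset.sum_congr rfl hd1, Finset.sum_congr rfl hd2, hd3]
    rw [e1, FF]
    have r1 : m + 2 - 1 = m + 1 := rfl
    have r2 : m + 2 - 2 = m := rfl
    rw [r1, r2]
    simp only [mul_sub, Finset.sum_sub_distrib, Finset.sum_const, Finset.card_range,
      nsmul_eq_mul, ← Finset.mul_sum]
    push_cast
    ring
  -- continuity of FF at 0
  have hFt : Filter.Tendsto (FF (m+2) lam (T (m+2))) (nhds 0)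
      (nhds (FF (m+2) lam (T (m+2)) 0)) := by
    unfold FF
    apply Filter.Tendsto.const_mul
    apply Filter.Tendsto.sub
    apply Filter.Tendsto.sub
    · exact tendsto_finset_sum _
        (fun j hj => hhF_contAt (Cm_pos (hmul j (by rw [Finset.mem_range] at hj; omega))))
    · exact tendsto_finset_sum _
        (fun j hj => hhF_contAt (Cm_pos (hsingle j (by rw [Finset.mem_range] at hj; omega))))
    · exact hhF_contAt (Cm_pos hTn1)
  have hsin : Filter.Tendsto Real.sin (nhdsWithin 0 (Set.Ioi 0)) (nhds 0) := by
    have h := Real.continuous_sin.tendsto 0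
    rw [Real.sin_zero] at h
    exact h.mono_left nhdsWithin_le_nhds
  have hcomp : Filter.Tendsto (fun φ => FF (m+2) lam (T (m+2)) (Real.sin φ))
      (nhdsWithin 0 (Set.Ioi 0)) (nhds (FF (m+2) lam (T (m+2)) 0)) := hFt.comp hsin
  have heq : (fun φ : ℝ => tension (m+2) (x φ)) =ᶠ[nhdsWithin 0 (Set.Ioi 0)]
      (fun φ => FF (m+2) lam (T (m+2)) (Real.sin φ)) := by
    filter_upwards [Ioo_mem_nhdsGT_of_mem
      (Set.left_mem_Ico.2 (by positivity : (0:ℝ) < π/2))] with φ hφ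
    exact key φ hφ.1 hφ.2.le
  -- value at 0
  have r1 : m + 2 - 1 = m + 1 := rfl
  have r2 : m + 2 - 2 = m := rfl
  have hFF0 : FF (m+2) lam (T (m+2)) 0
      = 2 * ((∑ j ∈ Finset.range (m+1),
            (Real.log (lam (j+1) * lam (j+2) - 1) - Real.log (lam (j+1) * lam (j+2)) / 2))
        - (∑ j ∈ Finset.range m,
            (Real.log (lam (j+2) - 1) - Real.log (lam (j+2)) / 2))
        - (Real.log (T (m+2) - 1) - Real.log (T (m+2)) / 2)) := by
    rw [FF, r1, r2, hhF_Cm_zero hTn1,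
      Finset.sum_congr rfl
        (fun j hj => hhF_Cm_zero (hmul j (by rw [Finset.mem_range] at hj; omega))),
      Finset.sum_congr rfl
        (fun j hj => hhF_Cm_zero (hsingle j (by rw [Finset.mem_range] at hj; omega)))]
  -- half-log cancellation
  have hcancel : (∑ j ∈ Finset.range (m+1), Real.log (lam (j+1) * lam (j+2)))
      - (∑ j ∈ Finset.range m, Real.log (lam (j+2))) - Real.log (T (m+2)) = 0 := by
    have e2 : (∑ j ∈ Finset.range (m+1), Real.log (lam (j+1) * lam (j+2)))
        = (∑ j ∈ Finset.range (m+1), Real.log (lam (j+1)))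
          + (∑ j ∈ Finset.range (m+1), Real.log (lam (j+2))) := by
      rw [← Finset.sum_add_distrib]
      refine Finset.sum_congr rfl (fun j hj => ?_)
      rw [Finset.mem_range] at hj
      exact Real.log_mul (hlampos (j+1) (by omega) (by omega)).ne'
        (hlampos (j+2) (by omega) (by omega)).ne'
    have e3 : Real.log (T (m+2)) = ∑ i ∈ Finset.Icc 1 (m+2), Real.log (lam i) := by
      rw [hTdef]
      exact Real.log_prod
        (fun i hi => (hlampos i (Finset.mem_Icc.1 hi).1 (Finset.mem_Icc.1 hi).2).ne')
    have e4 : (∑ i ∈ Finset.Icc 1 (m+2), Real.log (lam i))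
        = ∑ k ∈ Finset.range (m+2), Real.log (lam (k+1)) := by
      rw [← Finset.Ico_add_one_right_eq_Icc, Finset.sum_Ico_eq_sum_range]
      exact Finset.sum_congr rfl (fun k _ => by rw [Nat.add_comm])
    have e5 : (∑ k ∈ Finset.range (m+2), Real.log (lam (k+1)))
        = (∑ k ∈ Finset.range (m+1), Real.log (lam (k+1))) + Real.log (lam (m+2)) :=
      Finset.sum_range_succ _ (m+1)
    have e6 : (∑ j ∈ Finset.range (m+1), Real.log (lam (j+2)))
        = (∑ j ∈ Finset.range m, Real.log (lam (j+2))) + Real.log (lam (m+2)) :=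
      Finset.sum_range_succ _ m
    rw [e2, e3, e4, e5, e6]
    ring
  -- numerator and denominator logs
  have hNpos : ∀ j ∈ Finset.Icc 1 (m+1), (0:ℝ) < lam j * lam (j+1) - 1 := by
    intro j hj
    rw [Finset.mem_Icc] at hj
    have := hmul (j-1) (by omega)
    have hj1 : j - 1 + 1 = j := by omega
    have hj2 : j - 1 + 2 = j + 1 := by omega
    rw [hj1, hj2] at this
    linarith
  have hDpos : ∀ j ∈ Finset.Icc 2 (m+1), (0:ℝ) < lam j - 1 := by
    intro j hj
    rw [Finset.mem_Icc] at hj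
    have := hlam j (by omega) (by omega)
    linarith
  have hNum : Real.log (∏ j ∈ Finset.Icc 1 (m+1), (lam j * lam (j+1) - 1))
      = ∑ j ∈ Finset.range (m+1), Real.log (lam (j+1) * lam (j+2) - 1) := by
    rw [Real.log_prod (fun j hj => (hNpos j hj).ne'), ← Finset.Ico_add_one_right_eq_Icc,
      Finset.sum_Ico_eq_sum_range]
    refine Finset.sum_congr rfl (fun k _ => ?_)
    rw [show 1 + k = k + 1 from Nat.add_comm 1 k]
  have hDen : Real.log (∏ j ∈ Finset.Icc 2 (m+1), (lam j - 1))
      = ∑ j ∈ Finset.range m, Real.log (lam (j+2) - 1) := by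
    rw [Real.log_prod (fun j hj => (hDpos j hj).ne'), ← Finset.Ico_add_one_right_eq_Icc,
      Finset.sum_Ico_eq_sum_range]
    refine Finset.sum_congr rfl (fun k _ => ?_)
    rw [show 2 + k = k + 2 from Nat.add_comm 2 k]
  have hNP : (0:ℝ) < ∏ j ∈ Finset.Icc 1 (m+1), (lam j * lam (j+1) - 1) :=
    Finset.prod_pos hNpos
  have hDP : (0:ℝ) < ∏ j ∈ Finset.Icc 2 (m+1), (lam j - 1) :=
    Finset.prod_pos hDpos
  have hTP : (0:ℝ) < T (m+2) - 1 := by linarith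
  have hTgoal : (∏ j ∈ Finset.Icc 1 (m+2), lam j) = T (m+2) := rfl
  have hval : FF (m+2) lam (T (m+2)) 0
      = 2 * Real.log
        ((∏ j ∈ Finset.Icc 1 (m + 2 - 1), (lam j * lam (j + 1) - 1)) /
          (((∏ j ∈ Finset.Icc 1 (m + 2), lam j) - 1) *
            ∏ j ∈ Finset.Icc 2 (m + 2 - 1), (lam j - 1))) := by
    rw [r1, hTgoal, hFF0,
      Real.log_div (ne_of_gt hNP) (ne_of_gt (mul_pos hTP hDP)),
      Real.log_mul hTP.ne' hDP.ne', hNum, hDen,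
      Finset.sum_sub_distrib, Finset.sum_sub_distrib, ← Finset.sum_div, ← Finset.sum_div]
    linarith [hcancel]
  rw [← hval]
  exact hcomp.congr' heq.symm
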